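/- Let G be a graph on N vertices such that λ = λ₁(G) is the largest adjacency eigenvalue and λI − A_G + (1/2)J is positive semidefinite with rank at most d, where J is the all-ones matrix. If exactly j connected components of G have largest eigenvalue equal to λ, then rank(λI − A_G) ≤ d − 1 and N ≤ d − 1 + j. -/

import Mathlib

open scoped Classical

/-- The real adjacency matrix of a finite simple graph. -/
noncomputable def adjMat {V : Type*} [Fintype V] [DecidableEq V] (G : SimpleGraph V) :
    Matrix V V ℝ :=
  Matrix.of fun u v => if G.Adj u v then (1 : ℝ) else 0

/-- The eigenvalues (roots of the characteristic polynomial, with multiplicity) of a real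
matrix, listed in nondecreasing order. -/
noncomputable def eigList {V : Type*} [Fintype V] [DecidableEq V] (A : Matrix V V ℝ) : List ℝ :=
  A.charpoly.roots.sort (· ≤ ·)

/-- The `k`-th largest eigenvalue (with multiplicity) of `A`, 1-indexed:
`eig A 1 ≥ eig A 2 ≥ …`. -/
noncomputable def eig {V : Type*} [Fintype V] [DecidableEq V] (A : Matrix V V ℝ) (k : ℕ) : ℝ :=
  (eigList A).getD ((eigList A).length - k) 0

/-- The `k`-th largest adjacency eigenvalue of a finite simple graph (`λₖ(G)`). -/
noncomputable def graphEig {V : Type*} [Fintype V] [DecidableEq V] (G : SimpleGraph V)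
    (k : ℕ) : ℝ :=
  eig (adjMat G) k

/-- The multiplicity of `μ` as an eigenvalue of `A` (dimension of the eigenspace). -/
noncomputable def eigMult {V : Type*} [Fintype V] [DecidableEq V] (A : Matrix V V ℝ)
    (μ : ℝ) : ℕ :=
  Module.finrank ℝ (LinearMap.ker (A.mulVecLin - μ • LinearMap.id))

/-- The number of edges of a finite simple graph. -/
noncomputable def edgeCount {V : Type*} [Fintype V] (G : SimpleGraph V) : ℕ :=
  G.edgeSet.toFinite.toFinset.card

/-- The cyclomatic number `|E| - |V| + 1` of a (connected) finite graph. -/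
noncomputable def cyclomatic {V : Type*} [Fintype V] (G : SimpleGraph V) : ℕ :=
  edgeCount G + 1 - Fintype.card V

/-- The maximum degree of a finite simple graph. -/
noncomputable def maxDeg {V : Type*} [Fintype V] (G : SimpleGraph V) : ℕ :=
  Finset.univ.sup fun v => (G.neighborSet v).toFinite.toFinset.card

/-- The spider `T(ℓ,ℓ,ℓ)`: three paths of length `ℓ` (in edges) sharing exactly their
initial vertex `none`. -/
def spider (ℓ : ℕ) : SimpleGraph (Option (Fin 3 × Fin ℓ)) :=
  SimpleGraph.fromRel fun u v =>
    match u, v with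
    | none, some (_, j) => (j : ℕ) = 0
    | some (i, j), some (i', j') => i = i' ∧ (j' : ℕ) = (j : ℕ) + 1
    | _, _ => False

section aux
open Matrix
variable {V : Type*} [Fintype V] [DecidableEq V]

lemma eval_charpoly' (A : Matrix V V ℝ) (t : ℝ) :
    A.charpoly.eval t = (t • (1 : Matrix V V ℝ) - A).det := by
  rw [Matrix.charpoly, eval_det, Matrix.matPolyEquiv_charmatrix]
  have h : (algebraMap ℝ (V → ℝ)) t = fun _ => t := rfl
  simp [Matrix.scalar, Matrix.smul_one_eq_diagonal, h]

lemma mem_roots_of_eigen {A : Matrix V V ℝ} {μ : ℝ} {v : V → ℝ} (hv : v ≠ 0)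
    (h : A *ᵥ v = μ • v) : μ ∈ A.charpoly.roots := by
  rw [Polynomial.mem_roots (A.charpoly_monic.ne_zero), Polynomial.IsRoot.def, eval_charpoly',
    ← Matrix.exists_mulVec_eq_zero_iff]
  exact ⟨v, hv, by
    rw [Matrix.sub_mulVec, Matrix.smul_mulVec, Matrix.one_mulVec, h, sub_self]⟩

lemma root_le_eig_one {A : Matrix V V ℝ} {μ : ℝ} (h : μ ∈ A.charpoly.roots) : μ ≤ eig A 1 := by
  have hμ : μ ∈ eigList A := by rwa [eigList, Multiset.mem_sort]
  have hs : (eigList A).Pairwise (· ≤ ·) := Multiset.pairwise_sort _ _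
  obtain ⟨i, hi, rfl⟩ := List.mem_iff_getElem.mp hμ
  have hlen : (eigList A).length - 1 < (eigList A).length := by omega
  rw [eig, List.getD_eq_getElem _ _ hlen]
  exact hs.rel_get_of_le (by simp [Fin.le_def]; omega)

lemma eigen_le_eig_one {A : Matrix V V ℝ} {μ : ℝ} {v : V → ℝ} (hv : v ≠ 0)
    (h : A *ᵥ v = μ • v) : μ ≤ eig A 1 :=
  root_le_eig_one (mem_roots_of_eigen hv h)

lemma exists_eig_one_vector [Nonempty V] {A : Matrix V V ℝ} (hA : A.IsHermitian) :
    ∃ v : V → ℝ, v ≠ 0 ∧ A *ᵥ v = eig A 1 • v := by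
  obtain ⟨i⟩ := ‹Nonempty V›
  have h1 : hA.eigenvalues i ∈ A.charpoly.roots :=
    mem_roots_of_eigen ((WithLp.ofLp_eq_zero 2).not.mpr (hA.eigenvectorBasis.orthonormal.ne_zero i)) (hA.mulVec_eigenvectorBasis i)
  have hne : eigList A ≠ [] := by
    intro h
    have : hA.eigenvalues i ∈ eigList A := by rwa [eigList, Multiset.mem_sort]
    simp [h] at this
  have hlen : (eigList A).length - 1 < (eigList A).length := by
    have := List.length_pos_iff.mpr hne; omega
  have hmem : eig A 1 ∈ A.charpoly.roots := by
    have : eig A 1 ∈ eigList A := by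
      rw [eig, List.getD_eq_getElem _ _ hlen]; exact List.getElem_mem _
    rwa [eigList, Multiset.mem_sort] at this
  rw [Polynomial.mem_roots (A.charpoly_monic.ne_zero), Polynomial.IsRoot.def, eval_charpoly',
    ← Matrix.exists_mulVec_eq_zero_iff] at hmem
  obtain ⟨v, hv0, hv⟩ := hmem
  refine ⟨v, hv0, ?_⟩
  rw [Matrix.sub_mulVec, Matrix.smul_mulVec, Matrix.one_mulVec, sub_eq_zero] at hv
  exact hv.symm

end aux

section aux2
open Matrix
variable {V : Type*} [Fintype V] [DecidableEq V]

lemma adjMat_isHermitian (G : SimpleGraph V) : (adjMat G).IsHermitian := by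
  ext u v
  simp only [adjMat, Matrix.conjTranspose_apply, Matrix.of_apply, star_trivial]
  rw [SimpleGraph.adj_comm]

lemma adjMat_nonneg (G : SimpleGraph V) (u v : V) : 0 ≤ adjMat G u v := by
  simp only [adjMat, Matrix.of_apply]; split <;> norm_num

lemma isHermitian_smul_one_sub {A : Matrix V V ℝ} (hA : A.IsHermitian) (lam : ℝ) :
    (lam • (1 : Matrix V V ℝ) - A).IsHermitian := by
  ext u v
  simp only [Matrix.conjTranspose_apply, Matrix.sub_apply, Matrix.smul_apply, star_trivial,
    Matrix.one_apply]
  rw [← hA.apply u v]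
  simp only [Matrix.conjTranspose_apply, star_trivial]
  by_cases h : u = v <;> simp [h, eq_comm]

lemma psd_eig_smul_sub {A : Matrix V V ℝ} (hA : A.IsHermitian) {lam : ℝ}
    (hlam : lam = eig A 1) : (lam • (1 : Matrix V V ℝ) - A).PosSemidef := by
  have hB : (lam • (1 : Matrix V V ℝ) - A).IsHermitian := isHermitian_smul_one_sub hA lam
  refine hB.posSemidef_iff_eigenvalues_nonneg.mpr fun i => ?_
  set w : V → ℝ := ⇑(hB.eigenvectorBasis i) with hw
  have hw0 : w ≠ 0 := (WithLp.ofLp_eq_zero 2).not.mpr (hB.eigenvectorBasis.orthonormal.ne_zero i)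
  have hmv : (lam • (1 : Matrix V V ℝ) - A) *ᵥ w = hB.eigenvalues i • w :=
    hB.mulVec_eigenvectorBasis i
  rw [Matrix.sub_mulVec, Matrix.smul_mulVec, Matrix.one_mulVec] at hmv
  have hAw : A *ᵥ w = (lam - hB.eigenvalues i) • w := by
    rw [sub_smul, ← hmv]; abel
  have := eigen_le_eig_one hw0 hAw
  rw [← hlam] at this
  show (0 : ℝ) ≤ hB.eigenvalues i
  linarith

lemma dotProduct_quadform {A : Matrix V V ℝ} (lam : ℝ) (y : V → ℝ) :
    y ⬝ᵥ ((lam • (1 : Matrix V V ℝ) - A) *ᵥ y) = lam * (y ⬝ᵥ y) - y ⬝ᵥ (A *ᵥ y) := by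
  rw [Matrix.sub_mulVec, Matrix.smul_mulVec, Matrix.one_mulVec, dotProduct_sub,
    dotProduct_smul, smul_eq_mul]

lemma abs_eigen {A : Matrix V V ℝ} (hpos : ∀ u v, 0 ≤ A u v) {lam : ℝ}
    (hpsd : (lam • (1 : Matrix V V ℝ) - A).PosSemidef) {x : V → ℝ}
    (hx : A *ᵥ x = lam • x) :
    A *ᵥ (fun v => |x v|) = lam • (fun v => |x v|) := by
  set y : V → ℝ := fun v => |x v| with hy
  have key : (lam • (1 : Matrix V V ℝ) - A) *ᵥ y = 0 := by
    rw [← hpsd.dotProduct_mulVec_zero_iff, star_trivial]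
    have hyy : y ⬝ᵥ y = x ⬝ᵥ x := by
      simp [dotProduct, hy, abs_mul_abs_self]
    have hAy : x ⬝ᵥ (A *ᵥ x) ≤ y ⬝ᵥ (A *ᵥ y) := by
      simp only [dotProduct, Matrix.mulVec, Finset.mul_sum]
      refine Finset.sum_le_sum fun u _ => Finset.sum_le_sum fun v _ => ?_
      calc x u * (A u v * x v) ≤ |x u * (A u v * x v)| := le_abs_self _
        _ = y u * (A u v * y v) := by
          rw [abs_mul, abs_mul, abs_of_nonneg (hpos u v)]
    have h0 : lam * (x ⬝ᵥ x) - x ⬝ᵥ (A *ᵥ x) = 0 := by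
      rw [hx, dotProduct_smul, smul_eq_mul]; ring
    have hge : 0 ≤ y ⬝ᵥ ((lam • (1 : Matrix V V ℝ) - A) *ᵥ y) := by
      simpa using hpsd.dotProduct_mulVec_nonneg y
    have hle : y ⬝ᵥ ((lam • (1 : Matrix V V ℝ) - A) *ᵥ y) ≤ 0 := by
      rw [dotProduct_quadform, hyy]; linarith
    linarith
  rw [Matrix.sub_mulVec, Matrix.smul_mulVec, Matrix.one_mulVec, sub_eq_zero] at key
  exact key.symm

end aux2

section aux3
open Matrix SimpleGraph
variable {V : Type*} [Fintype V] [DecidableEq V] {G : SimpleGraph V}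

set_option linter.unusedSectionVars false

lemma eigen_zero_on_reachable {lam : ℝ} {x : V → ℝ}
    (hx : adjMat G *ᵥ x = lam • x) (hnn : ∀ v, 0 ≤ x v) {u v : V}
    (hu : x u = 0) (hr : G.Reachable u v) : x v = 0 := by
  obtain ⟨p⟩ := hr
  induction p with
  | nil => exact hu
  | @cons a c b hadj p ih =>
    apply ih ?_
    have h0 : ∑ w : V, adjMat G a w * x w = 0 := by
      have := congrFun hx a
      simp only [Matrix.mulVec, dotProduct, Pi.smul_apply, smul_eq_mul] at this
      rw [this, hu, mul_zero]
    have hterm : ∀ w ∈ Finset.univ, 0 ≤ adjMat G a w * x w := fun w _ =>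
      mul_nonneg (adjMat_nonneg G a w) (hnn w)
    have := (Finset.sum_eq_zero_iff_of_nonneg hterm).mp h0 c (Finset.mem_univ c)
    simpa [adjMat, hadj] using this

end aux3

section aux4
open Matrix SimpleGraph
variable {V : Type*} [Fintype V] [DecidableEq V] {G : SimpleGraph V}
set_option linter.unusedSectionVars false

lemma supp_closed {c : G.ConnectedComponent} {u v : V} (hu : u ∈ c.supp) (h : G.Adj u v) :
    v ∈ c.supp := by
  rw [SimpleGraph.ConnectedComponent.mem_supp_iff] at hu ⊢
  rw [← hu]
  exact SimpleGraph.ConnectedComponent.sound h.symm.reachable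

lemma proj_eigen {lam : ℝ} {x : V → ℝ} (c : G.ConnectedComponent)
    (hx : adjMat G *ᵥ x = lam • x) :
    adjMat G *ᵥ (fun v => if v ∈ c.supp then x v else 0)
      = lam • (fun v => if v ∈ c.supp then x v else 0) := by
  funext v
  simp only [Matrix.mulVec, dotProduct, Pi.smul_apply, smul_eq_mul]
  by_cases hv : v ∈ c.supp
  · have hterm : ∀ u ∈ Finset.univ,
        adjMat G v u * (if u ∈ c.supp then x u else 0) = adjMat G v u * x u := by
      intro u _
      by_cases hu : u ∈ c.supp
      · simp [hu]
      · have hA : adjMat G v u = 0 := by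
          simp only [adjMat, Matrix.of_apply, ite_eq_right_iff]
          intro hadj; exact absurd (supp_closed hv hadj) hu
        simp [hA]
    rw [Finset.sum_congr rfl hterm]
    have := congrFun hx v
    simp only [Matrix.mulVec, dotProduct, Pi.smul_apply, smul_eq_mul] at this
    simp [this, hv]
  · simp only [hv, if_false, mul_zero]
    refine Finset.sum_eq_zero fun u _ => ?_
    by_cases hu : u ∈ c.supp
    · have hA : adjMat G v u = 0 := by
        simp only [adjMat, Matrix.of_apply, ite_eq_right_iff]
        intro hadj; exact absurd (supp_closed hu hadj.symm) hv
      simp [hA]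
    · simp [hu]

lemma sum_subtype_eq_sum_univ {s : Set V} [Fintype s] (f : V → ℝ)
    (hf : ∀ v, v ∉ s → f v = 0) :
    ∑ u : s, f u = ∑ u : V, f u := by
  rw [← Finset.sum_subtype s.toFinset (fun x => by simp) f]
  exact Finset.sum_subset (Finset.subset_univ _) fun v _ hv => hf v (by simpa using hv)

lemma restrict_eigen {c : G.ConnectedComponent} {lam : ℝ} {x : V → ℝ}
    (hx : adjMat G *ᵥ x = lam • x) (hsupp : ∀ v, v ∉ c.supp → x v = 0) :
    adjMat (SimpleGraph.induce c.supp G) *ᵥ (fun u : c.supp => x u)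
      = lam • (fun u : c.supp => x u) := by
  funext v
  simp only [Matrix.mulVec, dotProduct, Pi.smul_apply, smul_eq_mul]
  have h1 : ∀ u : c.supp, adjMat (SimpleGraph.induce c.supp G) v u * x u
      = adjMat G (v : V) (u : V) * x u := fun u => rfl
  rw [Finset.sum_congr rfl fun u _ => h1 u]
  have hzero : ∀ u, u ∉ c.supp → adjMat G (v : V) u * x u = 0 := fun u hu => by
    rw [hsupp u hu, mul_zero]
  rw [sum_subtype_eq_sum_univ (fun u => adjMat G (v : V) u * x u) hzero]
  have := congrFun hx (v : V)
  simp only [Matrix.mulVec, dotProduct, Pi.smul_apply, smul_eq_mul] at this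
  exact this

lemma extend_eigen {c : G.ConnectedComponent} {mu : ℝ} {w : c.supp → ℝ}
    (hw : adjMat (SimpleGraph.induce c.supp G) *ᵥ w = mu • w) :
    adjMat G *ᵥ (fun v => if h : v ∈ c.supp then w ⟨v, h⟩ else 0)
      = mu • (fun v => if h : v ∈ c.supp then w ⟨v, h⟩ else 0) := by
  set x : V → ℝ := fun v => if h : v ∈ c.supp then w ⟨v, h⟩ else 0 with hxdef
  funext v
  simp only [Matrix.mulVec, dotProduct, Pi.smul_apply, smul_eq_mul]
  by_cases hv : v ∈ c.supp
  · have hzero : ∀ u, u ∉ c.supp → adjMat G v u * x u = 0 := fun u hu => by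
      simp only [hxdef]; rw [dif_neg hu, mul_zero]
    rw [← sum_subtype_eq_sum_univ (fun u => adjMat G v u * x u) hzero]
    have := congrFun hw ⟨v, hv⟩
    simp only [Matrix.mulVec, dotProduct, Pi.smul_apply, smul_eq_mul] at this
    have h2 : x v = w ⟨v, hv⟩ := by simp only [hxdef]; rw [dif_pos hv]
    rw [h2, ← this]
    refine Finset.sum_congr rfl fun u _ => ?_
    have h1 : adjMat (SimpleGraph.induce c.supp G) ⟨v, hv⟩ u = adjMat G v (u : V) := rfl
    rw [h1]
    congr 1
    simp only [hxdef]
    rw [dif_pos u.2]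
  · have h2 : x v = 0 := by simp only [hxdef]; rw [dif_neg hv]
    rw [h2, mul_zero]
    refine Finset.sum_eq_zero fun u _ => ?_
    by_cases hu : u ∈ c.supp
    · have hA : adjMat G v u = 0 := by
        simp only [adjMat, Matrix.of_apply, ite_eq_right_iff]
        intro hadj; exact absurd (supp_closed hu hadj.symm) hv
      simp [hA]
    · have : x u = 0 := by simp only [hxdef]; rw [dif_neg hu]
      rw [this, mul_zero]

end aux4

section count
open Matrix SimpleGraph Module
variable {V : Type*} [Fintype V] [DecidableEq V] {G : SimpleGraph V}
set_option linter.unusedSectionVars false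
set_option maxHeartbeats 1000000

lemma mem_kerB_iff {A : Matrix V V ℝ} {lam : ℝ} {x : V → ℝ} :
    x ∈ LinearMap.ker ((lam • (1 : Matrix V V ℝ) - A).mulVecLin) ↔ A *ᵥ x = lam • x := by
  rw [LinearMap.mem_ker, Matrix.mulVecLin_apply, Matrix.sub_mulVec, Matrix.smul_mulVec,
    Matrix.one_mulVec, sub_eq_zero]
  exact eq_comm

noncomputable def Ksub (G : SimpleGraph V) (lam : ℝ) (c : G.ConnectedComponent) :
    Submodule ℝ (V → ℝ) :=
  LinearMap.ker ((lam • (1 : Matrix V V ℝ) - adjMat G).mulVecLin) ⊓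
    ⨅ (v : V) (_ : v ∉ c.supp), LinearMap.ker (LinearMap.proj (R := ℝ) (φ := fun _ : V => ℝ) v)

lemma mem_Ksub_iff {lam : ℝ} {c : G.ConnectedComponent} {x : V → ℝ} :
    x ∈ Ksub G lam c ↔ (adjMat G *ᵥ x = lam • x ∧ ∀ v, v ∉ c.supp → x v = 0) := by
  rw [Ksub, Submodule.mem_inf, mem_kerB_iff]
  simp only [Submodule.mem_iInf, LinearMap.mem_ker, LinearMap.proj_apply]

lemma finrank_Ksub_le_one (lam : ℝ)
    (hpsd : (lam • (1 : Matrix V V ℝ) - adjMat G).PosSemidef) (c : G.ConnectedComponent) :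
    finrank ℝ (Ksub G lam c) ≤ 1 := by
  obtain ⟨u₀, hu₀⟩ := Quot.exists_rep c
  have hu₀' : G.connectedComponentMk u₀ = c := hu₀
  have key : ∀ x ∈ Ksub G lam c, x u₀ = 0 → x = 0 := by
    intro x hx h0
    rw [mem_Ksub_iff] at hx
    obtain ⟨hx1, hx2⟩ := hx
    have habs := abs_eigen (adjMat_nonneg G) hpsd hx1
    have hnn : ∀ v, 0 ≤ |x v| := fun v => abs_nonneg _
    funext v
    by_cases hv : v ∈ c.supp
    · have hr : G.Reachable u₀ v := by
        rw [ConnectedComponent.mem_supp_iff] at hv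
        exact (SimpleGraph.ConnectedComponent.eq).mp (hu₀'.trans hv.symm)
      have hz : |x u₀| = 0 := by rw [h0, abs_zero]
      have := eigen_zero_on_reachable habs hnn hz hr
      simpa using abs_eq_zero.mp this
    · exact hx2 v hv
  let f : Ksub G lam c →ₗ[ℝ] ℝ :=
    (LinearMap.proj u₀).comp (Ksub G lam c).subtype
  have hfinj : Function.Injective f := by
    intro x y hxy
    have hsub : ((x : V → ℝ) - (y : V → ℝ)) = 0 := by
      apply key _ (sub_mem x.2 y.2)
      have : (x : V → ℝ) u₀ = (y : V → ℝ) u₀ := hxy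
      simp [this]
    exact Subtype.ext (sub_eq_zero.mp hsub)
  have := LinearMap.finrank_le_finrank_of_injective hfinj
  simpa using this

lemma attaining_of_Ksub_ne_bot {lam : ℝ} (hlam : lam = graphEig G 1) {c : G.ConnectedComponent}
    (h : Ksub G lam c ≠ ⊥) :
    graphEig (SimpleGraph.induce c.supp G) 1 = lam := by
  obtain ⟨x, hx, hx0⟩ := Submodule.exists_mem_ne_zero_of_ne_bot h
  rw [mem_Ksub_iff] at hx
  obtain ⟨hx1, hx2⟩ := hx
  have hres := restrict_eigen hx1 hx2
  have hne : (fun u : c.supp => x u) ≠ 0 := by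
    intro hz
    apply hx0
    funext v
    by_cases hv : v ∈ c.supp
    · exact congrFun hz ⟨v, hv⟩
    · exact hx2 v hv
  have hge : lam ≤ eig (adjMat (SimpleGraph.induce c.supp G)) 1 := eigen_le_eig_one hne hres
  obtain ⟨u₀, hu₀⟩ := Quot.exists_rep c
  have hu₀' : u₀ ∈ c.supp := by
    rw [ConnectedComponent.mem_supp_iff]; exact hu₀
  have : Nonempty c.supp := ⟨⟨u₀, hu₀'⟩⟩
  obtain ⟨w, hw0, hw⟩ :=
    exists_eig_one_vector (adjMat_isHermitian (SimpleGraph.induce c.supp G))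
  have hext := extend_eigen hw
  have hne2 : (fun v => if h : v ∈ c.supp then w ⟨v, h⟩ else 0) ≠ 0 := by
    obtain ⟨u, hu⟩ := Function.ne_iff.mp hw0
    intro hz
    apply hu
    have := congrFun hz u.1
    rw [dif_pos u.2] at this
    simpa using this
  have hle : eig (adjMat (SimpleGraph.induce c.supp G)) 1 ≤ eig (adjMat G) 1 :=
    eigen_le_eig_one hne2 hext
  have hlam' : lam = eig (adjMat G) 1 := hlam
  exact le_antisymm (hlam' ▸ hle) hge

lemma finrank_kerB_le_sum (lam : ℝ) :
    finrank ℝ (LinearMap.ker ((lam • (1 : Matrix V V ℝ) - adjMat G).mulVecLin))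
      ≤ ∑ c : G.ConnectedComponent, finrank ℝ (Ksub G lam c) := by
  set K := LinearMap.ker ((lam • (1 : Matrix V V ℝ) - adjMat G).mulVecLin) with hK
  let p : G.ConnectedComponent → ((V → ℝ) →ₗ[ℝ] (V → ℝ)) := fun c =>
    { toFun := fun x v => if v ∈ c.supp then x v else 0
      map_add' := by
        intros a b; funext v
        by_cases h : G.connectedComponentMk v = c <;>
          simp [SimpleGraph.ConnectedComponent.mem_supp_iff, h]
      map_smul' := by
        intros r a; funext v
        by_cases h : G.connectedComponentMk v = c <;>
          simp [SimpleGraph.ConnectedComponent.mem_supp_iff, h] }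
  have hmem : ∀ (x : K) (c : G.ConnectedComponent), p c (x : V → ℝ) ∈ Ksub G lam c := by
    intro x c
    rw [mem_Ksub_iff]
    refine ⟨proj_eigen c (mem_kerB_iff.mp x.2), fun v hv => ?_⟩
    simp only [p, LinearMap.coe_mk, AddHom.coe_mk]
    rw [if_neg hv]
  let Φ : K →ₗ[ℝ] (∀ c : G.ConnectedComponent, Ksub G lam c) :=
    LinearMap.pi fun c =>
      ((p c).comp K.subtype).codRestrict (Ksub G lam c) (fun x => hmem x c)
  have hinj : Function.Injective Φ := by
    intro x y hxy
    apply Subtype.ext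
    funext v
    have h1 := congrFun (congrArg Subtype.val (congrFun hxy (G.connectedComponentMk v))) v
    have hv : v ∈ (G.connectedComponentMk v).supp := by
      rw [ConnectedComponent.mem_supp_iff]
    have h2 : (if G.Reachable v v then (x : V → ℝ) v else 0)
        = if G.Reachable v v then (y : V → ℝ) v else 0 := by
      simpa [Φ, p, LinearMap.codRestrict, hv] using h1
    simpa [if_pos (SimpleGraph.Reachable.refl (G := G) v)] using h2
  have h2 := LinearMap.finrank_le_finrank_of_injective hinj
  rwa [Module.finrank_pi_fintype] at h2

end count

section final
open Matrix SimpleGraph Module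
variable {V : Type*} [Fintype V] [DecidableEq V] {G : SimpleGraph V}
set_option linter.unusedSectionVars false
set_option maxHeartbeats 1000000

lemma finrank_kerB_le_card {lam : ℝ} (hlam : lam = graphEig G 1)
    (hpsd : (lam • (1 : Matrix V V ℝ) - adjMat G).PosSemidef) :
    finrank ℝ (LinearMap.ker ((lam • (1 : Matrix V V ℝ) - adjMat G).mulVecLin))
      ≤ Nat.card {c : G.ConnectedComponent //
          graphEig (SimpleGraph.induce c.supp G) 1 = lam} := by
  refine (finrank_kerB_le_sum lam).trans ?_
  have hbound : ∀ c : G.ConnectedComponent, finrank ℝ (Ksub G lam c)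
      ≤ if graphEig (SimpleGraph.induce c.supp G) 1 = lam then 1 else 0 := by
    intro c
    by_cases h : graphEig (SimpleGraph.induce c.supp G) 1 = lam
    · rw [if_pos h]; exact finrank_Ksub_le_one lam hpsd c
    · rw [if_neg h]
      rcases eq_or_ne (Ksub G lam c) ⊥ with hb | hb
      · rw [hb]; simp
      · exact absurd (attaining_of_Ksub_ne_bot hlam hb) h
  calc ∑ c : G.ConnectedComponent, finrank ℝ (Ksub G lam c)
      ≤ ∑ c : G.ConnectedComponent,
        (if graphEig (SimpleGraph.induce c.supp G) 1 = lam then 1 else 0) :=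
        Finset.sum_le_sum fun c _ => hbound c
    _ = (Finset.univ.filter fun c : G.ConnectedComponent =>
          graphEig (SimpleGraph.induce c.supp G) 1 = lam).card :=
        (Finset.card_filter _ _).symm
    _ = Nat.card {c : G.ConnectedComponent //
          graphEig (SimpleGraph.induce c.supp G) 1 = lam} := by
        rw [Nat.card_eq_fintype_card, Fintype.card_subtype]

lemma rank_nullity_matrix (X : Matrix V V ℝ) :
    X.rank + finrank ℝ (LinearMap.ker X.mulVecLin) = Fintype.card V := by
  have h := LinearMap.finrank_range_add_finrank_ker X.mulVecLin
  rw [Module.finrank_pi] at h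
  exact h

theorem rank_bound_top_eigenvalue' {V : Type*} [Fintype V] [DecidableEq V]
    (G : SimpleGraph V) (lam : ℝ) (d j : ℕ) (hlam : lam = graphEig G 1)
    (hpsd : (lam • (1 : Matrix V V ℝ) - adjMat G
      + (1 / 2 : ℝ) • Matrix.of fun _ _ => (1 : ℝ)).PosSemidef)
    (hrank : (lam • (1 : Matrix V V ℝ) - adjMat G
      + (1 / 2 : ℝ) • Matrix.of fun _ _ => (1 : ℝ)).rank ≤ d)
    (hj : j = Nat.card {c : G.ConnectedComponent //
      graphEig (SimpleGraph.induce c.supp G) 1 = lam}) :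
    (lam • (1 : Matrix V V ℝ) - adjMat G).rank ≤ d - 1 ∧
      Fintype.card V ≤ d - 1 + j := by
  classical
  set A := adjMat G with hA
  set B := lam • (1 : Matrix V V ℝ) - A with hB
  set J : Matrix V V ℝ := Matrix.of fun _ _ => (1 : ℝ) with hJdef
  set M := B + (1 / 2 : ℝ) • J with hM
  cases isEmpty_or_nonempty V with
  | inl hemp =>
    constructor
    · calc B.rank ≤ Fintype.card V := B.rank_le_card_width
        _ = 0 := by simp [Fintype.card_eq_zero]
        _ ≤ d - 1 := Nat.zero_le _
    · calc Fintype.card V = 0 := by simp [Fintype.card_eq_zero]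
        _ ≤ d - 1 + j := Nat.zero_le _
  | inr hne =>
    have hBpsd : B.PosSemidef := psd_eig_smul_sub (adjMat_isHermitian G) hlam
    -- quadratic form of J
    have hJq : ∀ x : V → ℝ, x ⬝ᵥ (J *ᵥ x) = (∑ v, x v) * (∑ v, x v) := by
      intro x
      simp only [hJdef, Matrix.mulVec, dotProduct, Matrix.of_apply, one_mul]
      rw [← Finset.sum_mul]
    -- ker M ≤ ker B
    have hle : LinearMap.ker M.mulVecLin ≤ LinearMap.ker B.mulVecLin := by
      intro x hx
      rw [LinearMap.mem_ker, Matrix.mulVecLin_apply] at hx ⊢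
      have hq : x ⬝ᵥ (M *ᵥ x) = 0 := by rw [hx, dotProduct_zero]
      have hsplit : x ⬝ᵥ (M *ᵥ x)
          = x ⬝ᵥ (B *ᵥ x) + (1 / 2 : ℝ) * (x ⬝ᵥ (J *ᵥ x)) := by
        rw [hM, Matrix.add_mulVec, Matrix.smul_mulVec, dotProduct_add,
          dotProduct_smul, smul_eq_mul]
      have h1 : 0 ≤ x ⬝ᵥ (B *ᵥ x) := by simpa using hBpsd.dotProduct_mulVec_nonneg x
      have h2 : 0 ≤ x ⬝ᵥ (J *ᵥ x) := by rw [hJq x]; exact mul_self_nonneg _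
      have h3 : x ⬝ᵥ (B *ᵥ x) = 0 := by linarith [hsplit, hq]
      have := (hBpsd.dotProduct_mulVec_zero_iff x).mp (by simpa using h3)
      exact this
    -- strictness
    obtain ⟨v, hv0, hv⟩ := exists_eig_one_vector (adjMat_isHermitian G)
    have hlam' : lam = eig A 1 := hlam
    rw [← hlam'] at hv
    have hy := abs_eigen (adjMat_nonneg G) hBpsd hv
    set y : V → ℝ := fun w => |v w| with hy_def
    have hyK : B *ᵥ y = 0 := by
      rw [hB, Matrix.sub_mulVec, Matrix.smul_mulVec, Matrix.one_mulVec, hy, sub_self]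
    have hynn : ∀ w, 0 ≤ y w := fun w => abs_nonneg _
    obtain ⟨w0, hw0⟩ := Function.ne_iff.mp hv0
    have hsum : 0 < ∑ w, y w := by
      refine Finset.sum_pos' (fun w _ => hynn w) ⟨w0, Finset.mem_univ w0, ?_⟩
      simpa [hy_def] using abs_pos.mpr hw0
    have hyM : M *ᵥ y ≠ 0 := by
      intro hz
      obtain ⟨u₀⟩ := hne
      have : (M *ᵥ y) u₀ = 0 := congrFun hz u₀
      rw [hM, Matrix.add_mulVec, Matrix.smul_mulVec, hyK] at this
      simp only [Pi.add_apply, Pi.zero_apply, zero_add, Pi.smul_apply, smul_eq_mul] at this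
      have hJy : (J *ᵥ y) u₀ = ∑ w, y w := by
        simp [hJdef, Matrix.mulVec, dotProduct]
      rw [hJy] at this
      linarith
    have hyB : y ∈ LinearMap.ker B.mulVecLin := by
      rw [LinearMap.mem_ker, Matrix.mulVecLin_apply]; exact hyK
    have hyM' : y ∉ LinearMap.ker M.mulVecLin := by
      rw [LinearMap.mem_ker, Matrix.mulVecLin_apply]; exact hyM
    have hlt : LinearMap.ker M.mulVecLin < LinearMap.ker B.mulVecLin :=
      lt_of_le_of_ne hle fun h => hyM' (h ▸ hyB)
    have hfr : finrank ℝ (LinearMap.ker M.mulVecLin)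
        < finrank ℝ (LinearMap.ker B.mulVecLin) :=
      Submodule.finrank_lt_finrank_of_lt hlt
    have hrnB := rank_nullity_matrix B
    have hrnM := rank_nullity_matrix M
    have hkerj : finrank ℝ (LinearMap.ker B.mulVecLin) ≤ j := by
      rw [hj]
      exact finrank_kerB_le_card hlam hBpsd
    constructor
    · omega
    · omega
end final

/-- If `λ = λ₁(G)`, the matrix `λI - A_G + (1/2)J` is positive semidefinite
with rank at most `d`, and exactly `j` connected components of `G` have largest eigenvalue
`λ`, then `rank(λI - A_G) ≤ d - 1` and `N ≤ d - 1 + j`. -/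
theorem rank_bound_top_eigenvalue {V : Type*} [Fintype V] [DecidableEq V]
    (G : SimpleGraph V) (lam : ℝ) (d j : ℕ) (hlam : lam = graphEig G 1)
    (hpsd : (lam • (1 : Matrix V V ℝ) - adjMat G
      + (1 / 2 : ℝ) • Matrix.of fun _ _ => (1 : ℝ)).PosSemidef)
    (hrank : (lam • (1 : Matrix V V ℝ) - adjMat G
      + (1 / 2 : ℝ) • Matrix.of fun _ _ => (1 : ℝ)).rank ≤ d)
    (hj : j = Nat.card {c : G.ConnectedComponent //
      graphEig (SimpleGraph.induce c.supp G) 1 = lam}) :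
    (lam • (1 : Matrix V V ℝ) - adjMat G).rank ≤ d - 1 ∧
      Fintype.card V ≤ d - 1 + j :=
  rank_bound_top_eigenvalue' G lam d j hlam hpsd hrank hj
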